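/- With u = [𝟏^{d_1}] ∈ B^{k,d_1} and v = [𝟏^β 𝟐_±^{d_2−α−β} 𝟑^α] ∈ B^{k,d_2} (d_1 > d_2 ≥ α+β), the total phase shift equals 2d_2 + H(u_k ⊗ v_k) + H(u_{<k} ⊗ v_{<k}) = d_2 − α + β. -/

import Mathlib

/-- A semistandard rectangular tableau with `k` rows, `l` columns and entries in `{1,…,n}`:
rows weakly increase left to right, columns strictly increase top to bottom. -/
structure RectTableau (n k l : ℕ) where
  entry : Fin k → Fin l → ℕ
  entry_pos : ∀ i j, 1 ≤ entry i j
  entry_le : ∀ i j, entry i j ≤ n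
  row_mono : ∀ i, Monotone (entry i)
  col_strict : ∀ j, StrictMono fun i => entry i j

namespace BBS

open scoped Classical

variable {n k l k' l' d d1 d2 : ℕ}

/-- The rows of a tableau, from top to bottom, each read left to right. -/
def toRows (x : RectTableau n k l) : List (List ℕ) :=
  (List.finRange k).map fun i => (List.finRange l).map fun j => x.entry i j

/-- The row word of a tableau: rows read left to right, bottom row first. -/
def rowWord (x : RectTableau n k l) : List ℕ :=
  ((List.finRange k).reverse).flatMap fun i => (List.finRange l).map fun j => x.entry i j

/-- Schensted row insertion of a single letter into a tableau (given as a list of rows). -/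
def rowInsertOne : List (List ℕ) → ℕ → List (List ℕ)
  | [], a => [[a]]
  | r :: rest, a =>
    match r.findIdx? (fun x => decide (a < x)) with
    | none => (r ++ [a]) :: rest
    | some idx => (r.set idx a) :: rowInsertOne rest (r.getD idx 0)

/-- Schensted row insertion of a word (leftmost letter first). -/
def rowInsertWord (T : List (List ℕ)) (w : List ℕ) : List (List ℕ) :=
  w.foldl rowInsertOne T

/-- The combinatorial `R`-matrix `B^{k,l} ⊗ B^{k',l'} → B^{k',l'} ⊗ B^{k,l}`, defined through
its row-insertion characterization: `x ⊗ y ↦ x̃ ⊗ ỹ` where `y ← row(x) = ỹ ← row(x̃)`. -/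
noncomputable def combR (x : RectTableau n k l) (y : RectTableau n k' l') :
    RectTableau n k' l' × RectTableau n k l :=
  if h : ∃ p : RectTableau n k' l' × RectTableau n k l,
      rowInsertWord (toRows p.2) (rowWord p.1) = rowInsertWord (toRows y) (rowWord x)
  then h.choose else (y, x)

/-- The number of boxes of a tableau strictly east of the `c`-th column. -/
def eastCount (T : List (List ℕ)) (c : ℕ) : ℕ := (T.map fun r => r.length - c).sum

/-- The energy function `H` on `B^{k,l} ⊗ B^{k',l'}`. -/
def energyH (x : RectTableau n k l) (y : RectTableau n k' l') : ℤ :=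
  (eastCount (rowInsertWord (toRows y) (rowWord x)) (max l l') : ℤ)
    - (min k k' : ℤ) * (min l l' : ℤ)

/-- The tableau `c_l = 1_k^l` all of whose columns are `(1,2,…,k)ᵗ`. -/
def constTab (n k l : ℕ) (h : k ≤ n) : RectTableau n k l where
  entry i _ := i.1 + 1
  entry_pos := by intro i j; (try dsimp only); omega
  entry_le := by intro i j; have := i.isLt; (try dsimp only); omega
  row_mono := fun _ => monotone_const
  col_strict := by
    intro j a b hab
    have h3 : a.1 < b.1 := hab
    dsimp only; omega

/-- Passing the carrier `c ∈ B^{k,l}` through a sequence of boxes by iterating the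
combinatorial `R : B^{k,l} ⊗ B^{k,1} → B^{k,1} ⊗ B^{k,l}`. -/
noncomputable def carrierPass : RectTableau n k l → List (RectTableau n k 1) →
    List (RectTableau n k 1) × RectTableau n k l
  | c, [] => ([], c)
  | c, b :: rest =>
    let bc := combR c b
    let rc := carrierPass bc.2 rest
    (bc.1 :: rc.1, rc.2)

/-- The box ball time evolution `T_l`. -/
noncomputable def timeEv (h : k ≤ n) (l : ℕ) (p : List (RectTableau n k 1)) :
    List (RectTableau n k 1) :=
  (carrierPass (constTab n k l h) p).1

/-- `∑_j H(b^{(j-1)} ⊗ b_j)` along a carrier pass. -/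
noncomputable def energySum : RectTableau n k l → List (RectTableau n k 1) → ℤ
  | _, [] => 0
  | c, b :: rest => energyH c b + energySum (combR c b).2 rest

/-- The conserved quantity `E_l(p) = -∑_j H(b^{(j-1)} ⊗ b_j)`. -/
noncomputable def bbsE (h : k ≤ n) (l : ℕ) (p : List (RectTableau n k 1)) : ℤ :=
  - energySum (constTab n k l h) p

/-- The word used in the signature rule: columns from right to left, each read top to bottom. -/
def sigWord (x : RectTableau n k l) : List ℕ :=
  ((List.finRange l).reverse).flatMap fun j => (List.finRange k).map fun i => x.entry i j

/-- The positions of the unpaired `-`'s (letters `i+1`) and unpaired `+`'s (letters `i`) of a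
word, after repeatedly deleting adjacent `+-` pairs.  The first component lists the unpaired
`-` positions in increasing order; the second lists the unpaired `+` positions in
decreasing order. -/
def sigUnpaired (i : ℕ) (w : List ℕ) : List ℕ × List ℕ :=
  (w.zipIdx.map Prod.swap).foldl (fun mp x =>
    if x.2 = i then (mp.1, x.1 :: mp.2)
    else if x.2 = i + 1 then
      match mp.2 with
      | [] => (mp.1 ++ [x.1], [])
      | _ :: rest => (mp.1, rest)
    else mp) ([], [])

/-- The Kashiwara operator `e_i` on words, via the signature rule. -/
def eWord (i : ℕ) (w : List ℕ) : Option (List ℕ) :=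
  match (sigUnpaired i w).1.getLast? with
  | none => none
  | some p => some (w.set p i)

/-- The Kashiwara operator `f_i` on words, via the signature rule. -/
def fWord (i : ℕ) (w : List ℕ) : Option (List ℕ) :=
  match (sigUnpaired i w).2.getLast? with
  | none => none
  | some p => some (w.set p (i + 1))

/-- Kashiwara operator `e_i` on a two-fold tensor product of rectangular tableaux. -/
noncomputable def eTen (i : ℕ) (p : RectTableau n k l × RectTableau n k' l') :
    Option (RectTableau n k l × RectTableau n k' l') :=
  match eWord i (sigWord p.1 ++ sigWord p.2) with
  | none => none
  | some w =>
    if h : ∃ q : RectTableau n k l × RectTableau n k' l',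
        sigWord q.1 ++ sigWord q.2 = w then some h.choose else none

/-- Kashiwara operator `f_i` on a two-fold tensor product of rectangular tableaux. -/
noncomputable def fTen (i : ℕ) (p : RectTableau n k l × RectTableau n k' l') :
    Option (RectTableau n k l × RectTableau n k' l') :=
  match fWord i (sigWord p.1 ++ sigWord p.2) with
  | none => none
  | some w =>
    if h : ∃ q : RectTableau n k l × RectTableau n k' l',
        sigWord q.1 ++ sigWord q.2 = w then some h.choose else none

/-- Kashiwara operator `e_i` on `(B^{k,1})^{⊗L}`. -/
noncomputable def eList (i : ℕ) (p : List (RectTableau n k 1)) :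
    Option (List (RectTableau n k 1)) :=
  match eWord i (p.flatMap sigWord) with
  | none => none
  | some w =>
    if h : ∃ q : List (RectTableau n k 1), q.length = p.length ∧ q.flatMap sigWord = w
    then some h.choose else none

/-- Kashiwara operator `f_i` on `(B^{k,1})^{⊗L}`. -/
noncomputable def fList (i : ℕ) (p : List (RectTableau n k 1)) :
    Option (List (RectTableau n k 1)) :=
  match fWord i (p.flatMap sigWord) with
  | none => none
  | some w =>
    if h : ∃ q : List (RectTableau n k 1), q.length = p.length ∧ q.flatMap sigWord = w
    then some h.choose else none

/-- Elementary Knuth transformations. -/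
inductive KnuthStep : List ℕ → List ℕ → Prop where
  | xzy (u v : List ℕ) (x y z : ℕ) (h1 : x ≤ y) (h2 : y < z) :
      KnuthStep (u ++ x :: z :: y :: v) (u ++ z :: x :: y :: v)
  | yxz (u v : List ℕ) (x y z : ℕ) (h1 : x < y) (h2 : y ≤ z) :
      KnuthStep (u ++ y :: x :: z :: v) (u ++ y :: z :: x :: v)

/-- Knuth equivalence of words. -/
def KnuthEquiv : List ℕ → List ℕ → Prop := Relation.EqvGen KnuthStep

/-- The column `(1,…,k-2,m,b)ᵗ ∈ B^{k,1}` (where `m` sits in row `k-1` and `b` in row `k`). -/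
def mkCol (n k m b : ℕ) (hm : k ≤ m + 1) (hb : m < b) (hn : b ≤ n) : RectTableau n k 1 where
  entry i _ := if i.1 + 1 = k then b else if i.1 + 2 = k then m else i.1 + 1
  entry_pos := by intro i j; (try dsimp only); split_ifs <;> omega
  entry_le := by intro i j; have := i.isLt; (try dsimp only); split_ifs <;> omega
  row_mono := fun _ => monotone_const
  col_strict := by
    intro j a b' hab
    have h1 := a.isLt; have h2 := b'.isLt
    have h3 : a.1 < b'.1 := hab
    dsimp only; split_ifs <;> omega

/-- `[𝟎] = (1,…,k-1,k)ᵗ`. -/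
def col0 (n k : ℕ) (hk : 1 ≤ k) (h : k ≤ n) : RectTableau n k 1 :=
  mkCol n k (k-1) k (by omega) (by omega) h
/-- `[𝟏] = (1,…,k-1,k+1)ᵗ`. -/
def col1 (n k : ℕ) (hk : 1 ≤ k) (h : k + 1 ≤ n) : RectTableau n k 1 :=
  mkCol n k (k-1) (k+1) (by omega) (by omega) h
/-- `[𝟐₊] = (1,…,k-2,k,k+1)ᵗ`. -/
def col2p (n k : ℕ) (hk : 1 ≤ k) (h : k + 1 ≤ n) : RectTableau n k 1 :=
  mkCol n k k (k+1) (by omega) (by omega) h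
/-- `[𝟐₋] = (1,…,k-2,k-1,k+2)ᵗ`. -/
def col2m (n k : ℕ) (hk : 1 ≤ k) (h : k + 2 ≤ n) : RectTableau n k 1 :=
  mkCol n k (k-1) (k+2) (by omega) (by omega) h
/-- `[𝟑] = (1,…,k-2,k,k+2)ᵗ`. -/
def col3 (n k : ℕ) (hk : 1 ≤ k) (h : k + 2 ≤ n) : RectTableau n k 1 :=
  mkCol n k k (k+2) (by omega) (by omega) h
/-- `[𝟒] = (1,…,k-2,k+1,k+2)ᵗ`. -/
def col4 (n k : ℕ) (hk : 1 ≤ k) (h : k + 2 ≤ n) : RectTableau n k 1 :=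
  mkCol n k (k+1) (k+2) (by omega) (by omega) h

/-- `ξ_i = [𝟎^{l-i} 𝟏^i] ∈ B^{k,l}`: the first `l-i` columns equal `[𝟎]`, the last `i`
columns equal `[𝟏]`. -/
def xiTab (n k l i : ℕ) (hk : 1 ≤ k) (hkn : k < n) : RectTableau n k l where
  entry r j := if r.1 + 1 = k ∧ l - i ≤ j.1 then k + 1 else r.1 + 1
  entry_pos := by intro r j; (try dsimp only); split_ifs <;> omega
  entry_le := by intro r j; have := r.isLt; (try dsimp only); split_ifs <;> omega
  row_mono := by
    intro r a b hab
    have h3 : a.1 ≤ b.1 := hab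
    dsimp only; split_ifs <;> omega
  col_strict := by
    intro j a b hab
    have h1 := a.isLt; have h2 := b.isLt
    have h3 : a.1 < b.1 := hab
    dsimp only; split_ifs <;> omega

/-- The rectangular tableau `[𝟏^a 𝟐_s^{ab-a} 𝟑^{d-ab}] ∈ B^{k,d}` whose first `a` columns are
`[𝟏]`, whose next columns (up to column `ab`) are `[𝟐₊]` (if `s`) or `[𝟐₋]` (if `¬s`), and
whose remaining columns are `[𝟑]`. -/
def pat3 (n k d a ab : ℕ) (s : Bool) (hk : 2 ≤ k) (hn : k + 2 ≤ n) : RectTableau n k d where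
  entry i j :=
    if i.1 + 1 = k then
      (if j.1 < a then k+1 else if j.1 < ab then (if s then k+1 else k+2) else k+2)
    else if i.1 + 2 = k then
      (if j.1 < a then k-1 else if j.1 < ab then (if s then k else k-1) else k)
    else i.1 + 1
  entry_pos := by intro i j; (try dsimp only); split_ifs <;> omega
  entry_le := by intro i j; have := i.isLt; (try dsimp only); split_ifs <;> omega
  row_mono := by
    intro i a' b' hab
    have h3 : a'.1 ≤ b'.1 := hab
    dsimp only; split_ifs <;> omega
  col_strict := by
    intro j a' b' hab
    have h1 := a'.isLt; have h2 := b'.isLt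
    have h3 : a'.1 < b'.1 := hab
    dsimp only; split_ifs <;> omega

/-- The `k`-th (bottom) row of a rectangular tableau, as an element of `B^{1,d}`. -/
def rowK (hk : 1 ≤ k) (u : RectTableau n k d) : RectTableau n 1 d where
  entry _ j := u.entry ⟨k - 1, by omega⟩ j
  entry_pos := fun _ j => u.entry_pos _ j
  entry_le := fun _ j => u.entry_le _ j
  row_mono := fun _ => u.row_mono _
  col_strict := by
    intro j a b hab
    have h3 : a.1 < b.1 := hab
    have h1 := a.isLt; have h2 := b.isLt
    exact absurd h3 (by omega)

/-- The first `k-1` rows of a rectangular tableau, as an element of `B^{k-1,d}`. -/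
def rowsLt (u : RectTableau n k d) : RectTableau n (k-1) d where
  entry i j := u.entry (Fin.castLE (Nat.sub_le k 1) i) j
  entry_pos := fun i j => u.entry_pos _ j
  entry_le := fun i j => u.entry_le _ j
  row_mono := fun i => u.row_mono _
  col_strict := by
    intro j a b hab
    exact u.col_strict j (show Fin.castLE (Nat.sub_le k 1) a < Fin.castLE (Nat.sub_le k 1) b from hab)

/-- The soliton conditions on a sequence of columns `S = (b_1,…,b_d)`, `b_j ∈ B^{k,1}`:
entries weakly decrease along each row of the sequence, the entry in row `k-1` of each
column is `≤ k` and the entry in row `k` is `> k`.  (Strict increase down each column is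
already part of the tableau structure.) -/
def IsSolitonFn {n k d : ℕ} (S : Fin d → RectTableau n k 1) : Prop :=
  (∀ j j' : Fin d, j.1 + 1 = j'.1 → ∀ (i : Fin k) (t : Fin 1),
      (S j').entry i t ≤ (S j).entry i t) ∧
  (∀ (j : Fin d) (i : Fin k) (t : Fin 1), i.1 + 1 = k → k < (S j).entry i t) ∧
  (∀ (j : Fin d) (i : Fin k) (t : Fin 1), i.1 + 2 = k → (S j).entry i t ≤ k)

/-- `lo` and `hi` are the two pieces `u_{<k} ∈ B^{k-1,d}` and `u_k ∈ B^{1,d}` of the internal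
degree of freedom `u = [b_d,…,b_1] ∈ B^{k,d}` of the soliton `S = (b_1,…,b_d)`. -/
def SplitDof {n k d : ℕ} (hk : 1 ≤ k) (S : Fin d → RectTableau n k 1)
    (lo : RectTableau n (k-1) d) (hi : RectTableau n 1 d) : Prop :=
  (∀ (i : Fin (k-1)) (j : Fin d),
      lo.entry i j = (S j.rev).entry (Fin.castLE (Nat.sub_le k 1) i) ⟨0, Nat.one_pos⟩) ∧
  (∀ (t : Fin 1) (j : Fin d),
      hi.entry t j = (S j.rev).entry ⟨k - 1, by omega⟩ ⟨0, Nat.one_pos⟩)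

/-- `(lo, hi) ∈ B^{k-1,d} × B^{1,d}` is the split internal degree of freedom of a soliton:
the entries of `lo` lie in `{1,…,k}` and those of `hi` in `{k+1,…,n}`. -/
def IsDof (k : ℕ) {n d : ℕ} (lo : RectTableau n (k-1) d) (hi : RectTableau n 1 d) : Prop :=
  (∀ i j, lo.entry i j ≤ k) ∧ (∀ t j, k < hi.entry t j)

/-- The two-body scattering map `R̃` on solitons with phases: internal degrees of freedom are
exchanged by the product of combinatorial `R`-matrices and the phases shift by
`δ = 2 d₂ + H(u_k ⊗ v_k) + H(u_{<k} ⊗ v_{<k})`. -/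
noncomputable def Rtilde {n k d1 d2 : ℕ}
    (a : ℤ × RectTableau n (k-1) d1 × RectTableau n 1 d1)
    (b : ℤ × RectTableau n (k-1) d2 × RectTableau n 1 d2) :
    (ℤ × RectTableau n (k-1) d2 × RectTableau n 1 d2)
      × (ℤ × RectTableau n (k-1) d1 × RectTableau n 1 d1) :=
  ((b.1 - (2 * (d2:ℤ) + energyH a.2.2 b.2.2 + energyH a.2.1 b.2.1),
      (combR a.2.1 b.2.1).1, (combR a.2.2 b.2.2).1),
   (a.1 + (2 * (d2:ℤ) + energyH a.2.2 b.2.2 + energyH a.2.1 b.2.1),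
      (combR a.2.1 b.2.1).2, (combR a.2.2 b.2.2).2))

end BBS
namespace BBSAux
open BBS List

abbrev rep (m a : ℕ) : List ℕ := List.replicate m a

/-! ### basic insertion lemmas -/

lemma ins_append {a : ℕ} (r : List ℕ) (rest : List (List ℕ)) (h : ∀ x ∈ r, ¬ a < x) :
    rowInsertOne (r :: rest) a = (r ++ [a]) :: rest := by
  have hf : r.findIdx? (fun x => decide (a < x)) = none := by
    rw [List.findIdx?_eq_none_iff]
    intro x hx; simp [h x hx]
  simp only [rowInsertOne, hf]

lemma findIdx_bump {a b : ℕ} (hab : a < b) (q : List ℕ) :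
    ∀ p : List ℕ, (∀ x ∈ p, ¬ a < x) →
      (p ++ b :: q).findIdx? (fun x => decide (a < x)) = some p.length := by
  intro p
  induction p with
  | nil => simp [List.findIdx?_cons, hab]
  | cons y p ih =>
    intro h
    have hy : ¬ a < y := h y (by simp)
    simp only [List.cons_append, List.findIdx?_cons, hy, decide_eq_true_eq, if_neg,
      ih (fun x hx => h x (by simp [hx]))]
    simp

lemma ins_bump {a b : ℕ} (hab : a < b) (q : List ℕ) (rest : List (List ℕ))
    (p : List ℕ) (h : ∀ x ∈ p, ¬ a < x) :
    rowInsertOne ((p ++ b :: q) :: rest) a = (p ++ a :: q) :: rowInsertOne rest b := by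
  have hf := findIdx_bump hab q p h
  have hset : (p ++ b :: q).set p.length a = p ++ a :: q := by
    rw [List.set_append]
    simp
  have hget : (p ++ b :: q).getD p.length 0 = b := by
    simp [List.getD, List.getElem?_append_right (le_refl p.length)]
  simp only [rowInsertOne, hf, hset, hget]


/-! ### the cascade shape -/

/-- `r` rows; row `j` (1-based) is `(a+j-1)^{d2} (c+j-1)^t (c+j)^u`. -/
def casc (d2 : ℕ) : ℕ → ℕ → ℕ → ℕ → ℕ → List (List ℕ)
  | _, _, _, _, 0 => []
  | a, c, t, u, r+1 =>
      (rep d2 a ++ rep t c ++ rep u (c+1)) :: casc d2 (a+1) (c+1) t u r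

lemma casc_shift (d2 : ℕ) : ∀ r a c t, casc d2 a (c+1) t 0 r = casc d2 a c 0 t r := by
  intro r
  induction r with
  | zero => intro a c t; rfl
  | succ r ih => intro a c t; simp [casc, ih]

lemma casc_c_irrel (d2 : ℕ) : ∀ r a c c', casc d2 a c 0 0 r = casc d2 a c' 0 0 r := by
  intro r
  induction r with
  | zero => intro a c c'; rfl
  | succ r ih =>
    intro a c c'
    simp only [casc, rep, List.replicate_zero, List.append_nil]
    rw [ih (a+1) (c+1) (c'+1)]

lemma casc_snoc (d2 : ℕ) : ∀ r a c t u, casc d2 a c t u (r+1)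
    = casc d2 a c t u r ++ [rep d2 (a+r) ++ rep t (c+r) ++ rep u (c+1+r)] := by
  intro r
  induction r with
  | zero => intro a c t u; simp [casc]
  | succ r ih =>
    intro a c t u
    have h1 : a+1+r = a+(r+1) := by omega
    have h2 : c+1+r = c+(r+1) := by omega
    have h3 : c+1+1+r = c+1+(r+1) := by omega
    show (rep d2 a ++ rep t c ++ rep u (c+1)) :: casc d2 (a+1) (c+1) t u (r+1) = _
    rw [ih (a+1) (c+1) t u, h1, h2, h3]
    rfl

lemma casc_ins (d2 t u : ℕ) : ∀ r a c (rest : List (List ℕ)), a ≤ c →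
    BBS.rowInsertOne (casc d2 a c t (u+1) r ++ rest) c
      = casc d2 a c (t+1) u r ++ BBS.rowInsertOne rest (c+r) := by
  intro r
  induction r with
  | zero => intro a c rest _; simp [casc]
  | succ r ih =>
    intro a c rest hac
    have hrow : rep d2 a ++ rep t c ++ rep (u+1) (c+1)
        = (rep d2 a ++ rep t c) ++ (c+1) :: rep u (c+1) := by
      simp [rep, List.replicate_succ]
    rw [casc, List.cons_append, hrow,
      ins_bump (Nat.lt_succ_self c) _ _ _ (by
        intro x hx
        simp only [rep, List.mem_append, List.mem_replicate] at hx
        rcases hx with ⟨_, rfl⟩ | ⟨_, rfl⟩ <;> omega),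
      ih (a+1) (c+1) rest (by omega)]
    have hrow2 : (rep d2 a ++ rep t c) ++ c :: rep u (c+1)
        = rep d2 a ++ rep (t+1) c ++ rep u (c+1) := by
      simp [rep, List.replicate_succ']
    have h2 : c+1+r = c+(r+1) := by omega
    rw [hrow2, h2, casc]
    simp

/-! ### passing a full constant word through the cascade -/

lemma phase_gen (d2 a c r : ℕ) (B : ℕ → List (List ℕ))
    (hB : ∀ t, BBS.rowInsertOne (B t) (c+r) = B (t+1)) (hac : a ≤ c) :
    ∀ u t, BBS.rowInsertWord (casc d2 a c t u r ++ B t) (rep u c)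
      = casc d2 a c (t+u) 0 r ++ B (t+u) := by
  intro u
  induction u with
  | zero => intro t; simp [BBS.rowInsertWord, rep]
  | succ u ih =>
    intro t
    have : rep (u+1) c = c :: rep u c := rfl
    rw [this]
    show BBS.rowInsertWord (BBS.rowInsertOne (casc d2 a c t (u+1) r ++ B t) c) (rep u c) = _
    rw [casc_ins d2 t u r a c (B t) hac, hB t, ih (t+1)]
    have h1 : t+1+u = t+(u+1) := by omega
    rw [h1]


lemma rep_snoc_cons (a L : ℕ) (q : List ℕ) :
    List.replicate a L ++ L :: q = List.replicate (a+1) L ++ q := by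
  rw [List.replicate_succ']; simp

/-! ### the bottom (mixed) rows -/

def btm (L m e : ℕ) : ℕ → List (List ℕ)
  | 0 => [rep m L ++ rep e (L+1)]
  | t+1 =>
    match e with
    | 0 => [rep (m+(t+1)) L]
    | _+1 => [rep (m+(t+1)) L ++ rep (e-(t+1)) (L+1), rep (min (t+1) e) (L+1)]

lemma btm_step (L m e t : ℕ) : BBS.rowInsertOne (btm L m e t) L = btm L m e (t+1) := by
  rcases Nat.eq_zero_or_pos t with ht | ht
  · subst ht
    rcases Nat.eq_zero_or_pos e with he | he
    · subst he
      show BBS.rowInsertOne [rep m L ++ rep 0 (L+1)] L = [rep (m+1) L]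
      rw [ins_append _ _ (by intro x hx; simp only [rep, List.replicate_zero,
        List.append_nil, List.mem_replicate] at hx; omega)]
      simp [rep, List.replicate_succ']
    · obtain ⟨e', rfl⟩ : ∃ e', e = e' + 1 := ⟨e - 1, by omega⟩
      show BBS.rowInsertOne [rep m L ++ rep (e'+1) (L+1)] L
        = [rep (m+1) L ++ rep (e'+1-1) (L+1), rep (min 1 (e'+1)) (L+1)]
      have hrow : rep m L ++ rep (e'+1) (L+1) = rep m L ++ (L+1) :: rep e' (L+1) := by
        simp [rep, List.replicate_succ]
      rw [hrow, ins_bump (show L < L+1 by omega) _ _ _ (by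
        intro x hx; simp only [rep, List.mem_replicate] at hx; omega)]
      show _ :: [[L+1]] = _
      have h1 : min 1 (e'+1) = 1 := by omega
      simp [h1, rep, List.replicate_succ']
  · obtain ⟨t', rfl⟩ : ∃ t', t = t' + 1 := ⟨t - 1, by omega⟩
    rcases Nat.eq_zero_or_pos e with he | he
    · subst he
      show BBS.rowInsertOne [rep (m+(t'+1)) L] L = [rep (m+(t'+1+1)) L]
      rw [ins_append _ _ (by intro x hx; simp only [rep, List.mem_replicate] at hx; omega)]
      have h5 : m+(t'+1+1) = (m+(t'+1))+1 := by omega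
      rw [h5]; simp [rep, List.replicate_succ']
    · obtain ⟨e', rfl⟩ : ∃ e', e = e' + 1 := ⟨e - 1, by omega⟩
      show BBS.rowInsertOne
          [rep (m+(t'+1)) L ++ rep (e'+1-(t'+1)) (L+1), rep (min (t'+1) (e'+1)) (L+1)] L
        = [rep (m+(t'+1+1)) L ++ rep (e'+1-(t'+1+1)) (L+1), rep (min (t'+1+1) (e'+1)) (L+1)]
      by_cases hte : t' + 1 < e' + 1
      · obtain ⟨f, hf⟩ : ∃ f, e'+1 - (t'+1) = f + 1 := ⟨e'+1 - (t'+1) - 1, by omega⟩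
        rw [hf]
        have hrow : rep (m+(t'+1)) L ++ rep (f+1) (L+1)
            = rep (m+(t'+1)) L ++ (L+1) :: rep f (L+1) := by
          simp [rep, List.replicate_succ]
        rw [hrow, ins_bump (show L < L+1 by omega) _ _ _ (by
          intro x hx; simp only [rep, List.mem_replicate] at hx; omega)]
        rw [ins_append _ _ (by intro x hx; simp only [rep, List.mem_replicate] at hx; omega)]
        have h1 : min (t'+1) (e'+1) = t'+1 := by omega
        have h2 : min (t'+1+1) (e'+1) = t'+1+1 := by omega
        have h3 : e'+1 - (t'+1+1) = f := by omega
        rw [h1, h2, h3]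
        show (List.replicate (m+(t'+1)) L ++ L :: List.replicate f (L+1)) :: _ = _
        rw [rep_snoc_cons, show m+(t'+1)+1 = m+(t'+1+1) by omega]
        simp [rep, List.replicate_succ']
      · have h0 : e'+1 - (t'+1) = 0 := by omega
        rw [h0, show rep (m+(t'+1)) L ++ rep 0 (L+1) = rep (m+(t'+1)) L by simp [rep]]
        rw [ins_append _ _ (by intro x hx; simp only [rep, List.mem_replicate] at hx; omega)]
        have h1 : min (t'+1) (e'+1) = min (t'+1+1) (e'+1) := by omega
        have h2 : e'+1 - (t'+1+1) = 0 := by omega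
        rw [h1, h2]
        have h5 : m+(t'+1+1) = (m+(t'+1))+1 := by omega
        rw [h5]; simp [rep, List.replicate_succ']

/-! ### the word of the upper tableau and the main insertion computation -/

/-- letters `c, c-1, …, 1`, each repeated `d1` times. -/
def wrd (d1 : ℕ) : ℕ → List ℕ
  | 0 => []
  | c+1 => rep d1 (c+1) ++ wrd d1 c

lemma main_claim (d1 d2 m' e : ℕ) :
    ∀ c r, BBS.rowInsertWord
        (casc d2 1 (c+2) d1 0 r ++ (casc d2 (r+1) 0 0 0 c ++ btm (c+1+r) m' e 0))
        (wrd d1 (c+1))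
      = casc d2 1 1 d1 0 (c+r) ++ btm (c+1+r) m' e d1 := by
  intro c
  induction c with
  | zero =>
    intro r
    show BBS.rowInsertWord (casc d2 1 2 d1 0 r ++ ([] ++ btm (1+r) m' e 0)) (rep d1 1 ++ []) = _
    rw [List.nil_append, List.append_nil, casc_shift]
    have := phase_gen d2 1 1 r (btm (1+r) m' e)
      (fun t => btm_step (1+r) m' e t) (le_refl 1) d1 0
    simpa using this
  | succ c ih =>
    intro r
    show BBS.rowInsertWord _ (rep d1 (c+2) ++ wrd d1 (c+1)) = _
    rw [show BBS.rowInsertWord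
        (casc d2 1 (c+1+2) d1 0 r ++ (casc d2 (r+1) 0 0 0 (c+1) ++ btm (c+1+1+r) m' e 0))
        (rep d1 (c+2) ++ wrd d1 (c+1))
      = BBS.rowInsertWord (BBS.rowInsertWord
          (casc d2 1 (c+1+2) d1 0 r ++ (casc d2 (r+1) 0 0 0 (c+1) ++ btm (c+1+1+r) m' e 0))
          (rep d1 (c+2))) (wrd d1 (c+1)) from List.foldl_append]
    have hB : ∀ t, BBS.rowInsertOne
        ((rep d2 (r+1) ++ rep t (c+2+r)) ::
          (casc d2 (r+2) 1 0 0 c ++ btm (c+1+1+r) m' e 0)) ((c+2)+r)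
        = (rep d2 (r+1) ++ rep (t+1) (c+2+r)) ::
          (casc d2 (r+2) 1 0 0 c ++ btm (c+1+1+r) m' e 0) := by
      intro t
      rw [ins_append _ _ (by
        intro x hx
        simp only [rep, List.mem_append, List.mem_replicate] at hx
        rcases hx with ⟨_, rfl⟩ | ⟨_, rfl⟩ <;> omega)]
      rw [List.append_assoc, show rep t (c+2+r) ++ [c+2+r] = rep (t+1) (c+2+r) by
        simp [rep, List.replicate_succ']]
    have hphase := phase_gen d2 1 (c+2) r
      (fun t => (rep d2 (r+1) ++ rep t (c+2+r)) ::
          (casc d2 (r+2) 1 0 0 c ++ btm (c+1+1+r) m' e 0)) hB (by omega) d1 0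
    have hstart : casc d2 1 (c+1+2) d1 0 r ++ (casc d2 (r+1) 0 0 0 (c+1) ++ btm (c+1+1+r) m' e 0)
        = casc d2 1 (c+2) 0 d1 r ++ ((rep d2 (r+1) ++ rep 0 (c+2+r)) ::
            (casc d2 (r+2) 1 0 0 c ++ btm (c+1+1+r) m' e 0)) := by
      rw [show (c+1+2) = (c+2)+1 from rfl, casc_shift]
      simp [casc, rep]
    rw [hstart, hphase]
    have hend : casc d2 1 (c+2) (0+d1) 0 r ++ ((rep d2 (r+1) ++ rep (0+d1) (c+2+r)) ::
          (casc d2 (r+2) 1 0 0 c ++ btm (c+1+1+r) m' e 0))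
        = casc d2 1 (c+2) d1 0 (r+1) ++ (casc d2 (r+1+1) 0 0 0 c ++ btm (c+1+(r+1)) m' e 0) := by
      rw [casc_snoc]
      have h4 : c+1+1+r = c+1+(r+1) := by omega
      have h5 : (c+2)+r = c+2+r := rfl
      rw [casc_c_irrel d2 c (r+2) 1 0]
      simp only [Nat.zero_add, h4, List.append_assoc, List.cons_append, List.singleton_append]
      congr 2
      · congr 1 <;> [skip; congr 1] <;> simp [rep] <;> omega
    rw [hend, ih (r+1), show c+1+(r+1) = c+1+1+r by omega, show c+(r+1) = c+1+r by omega]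

/-! ### conversion of `toRows` / `rowWord` to explicit lists -/

lemma map_finRange {α : Type*} : ∀ (N : ℕ) (f : ℕ → α),
    (List.finRange N).map (fun i => f i.1) = (List.range N).map f := by
  intro N
  induction N with
  | zero => intro f; rfl
  | succ N ih =>
    intro f
    rw [List.finRange_succ, List.range_succ_eq_map]
    simp only [List.map_cons, List.map_map]
    congr 1
    have : ((fun i : Fin (N+1) => f i.1) ∘ Fin.succ) = fun i : Fin N => f (i.1+1) := by
      funext i; simp [Fin.val_succ]
    rw [this, ih (fun a => f (a+1))]
    congr 1

lemma map_range_const {α : Type*} (d : ℕ) (v : α) :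
    (List.range d).map (fun _ => v) = List.replicate d v := by
  simp [List.map_const']

lemma map_range_ite (X Y a b : ℕ) :
    (List.range (a+b)).map (fun j => if j < a then X else Y) = rep a X ++ rep b Y := by
  rw [List.range_add, List.map_append, List.map_map]
  congr 1
  · rw [List.map_congr_left (fun x hx => by
      rw [if_pos (List.mem_range.mp hx)])]
    exact map_range_const a X
  · rw [show ((fun j => if j < a then X else Y) ∘ (a + ·)) = fun _ : ℕ => Y by
      funext j; simp only [Function.comp]; rw [if_neg (by omega)]]
    exact map_range_const b Y

lemma casc_const (d2 : ℕ) (a : ℕ) : ∀ r,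
    (List.range r).map (fun i => rep d2 (a+i)) = casc d2 a 0 0 0 r := by
  intro r
  induction r with
  | zero => rfl
  | succ r ih =>
    rw [List.range_succ, List.map_append, ih, casc_snoc]
    simp [rep]

lemma flat_rev (d1 : ℕ) : ∀ N,
    ((List.range N).reverse).flatMap (fun a => rep d1 (a+1)) = wrd d1 N := by
  intro N
  induction N with
  | zero => rfl
  | succ N ih =>
    rw [List.range_succ, List.reverse_append]
    simp only [List.reverse_singleton, List.singleton_append, List.flatMap_cons, ih]
    rfl

/-! ### east counts -/

lemma east_append (A B : List (List ℕ)) (c : ℕ) :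
    BBS.eastCount (A ++ B) c = BBS.eastCount A c + BBS.eastCount B c := by
  simp [BBS.eastCount]

lemma east_casc (d2 d1 : ℕ) : ∀ r a c, BBS.eastCount (casc d2 a c d1 0 r) d1 = r * d2 := by
  intro r
  induction r with
  | zero => intro a c; simp [casc, BBS.eastCount]
  | succ r ih =>
    intro a c
    have h := ih (a+1) (c+1)
    simp only [casc, BBS.eastCount, List.map_cons, List.sum_cons] at h ⊢
    rw [h]
    simp only [rep, List.length_append, List.length_replicate]
    have h2 : d2 + d1 + 0 - d1 = d2 := by omega
    rw [h2]
    ring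

lemma east_btm (L m e d1 : ℕ) (he : e ≤ d1) (h1 : 1 ≤ d1) :
    BBS.eastCount (btm L m e d1) d1 = m := by
  obtain ⟨t, rfl⟩ : ∃ t, d1 = t + 1 := ⟨d1 - 1, by omega⟩
  rcases Nat.eq_zero_or_pos e with rfl | he'
  · show BBS.eastCount [rep (m+(t+1)) L] (t+1) = m
    simp [BBS.eastCount, rep]
  · obtain ⟨e', rfl⟩ : ∃ e', e = e' + 1 := ⟨e - 1, by omega⟩
    show BBS.eastCount [rep (m+(t+1)) L ++ rep (e'+1-(t+1)) (L+1),
      rep (min (t+1) (e'+1)) (L+1)] (t+1) = m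
    simp [BBS.eastCount, rep]
    omega

/-! ### converting the four tableaux to explicit lists -/

lemma flatMap_rev_fin {α : Type*} (N : ℕ) (g : ℕ → List α) :
    ((List.finRange N).reverse).flatMap (fun i => g i.1)
      = ((List.range N).reverse).flatMap g := by
  rw [List.flatMap_def, List.flatMap_def, List.map_reverse, List.map_reverse,
    map_finRange N g]

lemma conv_hi_u (n m d1 : ℕ) (s : Bool) (hk : 2 ≤ m+2) (hkn : m+2+2 ≤ n) (h1 : 1 ≤ m+2) :
    BBS.rowWord (BBS.rowK h1 (BBS.pat3 n (m+2) d1 d1 d1 s hk hkn)) = rep d1 (m+3) := by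
  show ((List.finRange 1).reverse).flatMap
      (fun i : Fin 1 => (List.finRange d1).map
        (fun j => (BBS.rowK h1 (BBS.pat3 n (m+2) d1 d1 d1 s hk hkn)).entry i j)) = _
  rw [show List.finRange 1 = [0] by simp [List.finRange_succ]]
  simp only [List.reverse_cons, List.reverse_nil, List.nil_append, List.flatMap_cons,
    List.flatMap_nil, List.append_nil]
  refine (List.map_congr_left (g := fun _ : Fin d1 => m+3) fun j _ => ?_).trans
    (by simp [List.map_const', rep])
  have hj := j.isLt
  simp only [BBS.rowK, BBS.pat3]
  split_ifs <;> omega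

lemma conv_hi_v (n m d2 α β πh : ℕ) (s : Bool) (hk : 2 ≤ m+2) (hkn : m+2+2 ≤ n)
    (h1 : 1 ≤ m+2) (hab : α + β ≤ d2) (hπ : πh = if s then d2 - α else β) :
    BBS.toRows (BBS.rowK h1 (BBS.pat3 n (m+2) d2 β (d2-α) s hk hkn))
      = btm (m+3) πh (d2-πh) 0 := by
  have hπd : πh ≤ d2 := by rcases s with _|_ <;> simp at hπ <;> omega
  show (List.finRange 1).map
      (fun i : Fin 1 => (List.finRange d2).map
        (fun j => (BBS.rowK h1 (BBS.pat3 n (m+2) d2 β (d2-α) s hk hkn)).entry i j)) = _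
  rw [show List.finRange 1 = [0] by simp [List.finRange_succ]]
  simp only [List.map_cons, List.map_nil]
  have step1 : (List.finRange d2).map
        (fun j => (BBS.rowK h1 (BBS.pat3 n (m+2) d2 β (d2-α) s hk hkn)).entry 0 j)
      = (List.finRange d2).map (fun j : Fin d2 => if j.1 < πh then m+3 else m+4) := by
    refine List.map_congr_left fun j _ => ?_
    have hj := j.isLt
    rcases s with _|_ <;> simp at hπ <;>
      subst hπ <;> simp only [BBS.rowK, BBS.pat3] <;> split_ifs <;>
      first | contradiction | omega
  rw [step1, map_finRange d2 (fun j => if j < πh then m+3 else m+4)]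
  have step2 := map_range_ite (m+3) (m+4) πh (d2-πh)
  rw [show πh + (d2-πh) = d2 by omega] at step2
  rw [step2]
  rfl

lemma conv_lo_u (n m d1 : ℕ) (s : Bool) (hk : 2 ≤ m+2) (hkn : m+2+2 ≤ n) :
    BBS.rowWord (BBS.rowsLt (BBS.pat3 n (m+2) d1 d1 d1 s hk hkn)) = wrd d1 (m+1) := by
  show ((List.finRange (m+1)).reverse).flatMap
      (fun i : Fin (m+1) => (List.finRange d1).map
        (fun j => (BBS.rowsLt (BBS.pat3 n (m+2) d1 d1 d1 s hk hkn)).entry i j)) = _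
  have step1 : ∀ i : Fin (m+1), (List.finRange d1).map
        (fun j => (BBS.rowsLt (BBS.pat3 n (m+2) d1 d1 d1 s hk hkn)).entry i j)
      = rep d1 (i.1+1) := by
    intro i
    refine (List.map_congr_left (g := fun _ : Fin d1 => i.1+1) fun j _ => ?_).trans
      (by simp [List.map_const', rep])
    have hj := j.isLt
    have hi := i.isLt
    simp only [BBS.rowsLt, BBS.pat3, Fin.coe_castLE]
    split_ifs <;> omega
  calc ((List.finRange (m+1)).reverse).flatMap
        (fun i : Fin (m+1) => (List.finRange d1).map
          (fun j => (BBS.rowsLt (BBS.pat3 n (m+2) d1 d1 d1 s hk hkn)).entry i j))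
      = ((List.finRange (m+1)).reverse).flatMap (fun i : Fin (m+1) => rep d1 (i.1+1)) := by
        rw [List.flatMap_def, List.flatMap_def]
        congr 1
        exact List.map_congr_left fun i _ => step1 i
    _ = wrd d1 (m+1) := by
        rw [flatMap_rev_fin (m+1) (fun a => rep d1 (a+1)), flat_rev]

lemma conv_lo_v (n m d2 α β πl : ℕ) (s : Bool) (hk : 2 ≤ m+2) (hkn : m+2+2 ≤ n)
    (hab : α + β ≤ d2) (hπ : πl = if s then β else d2 - α) :
    BBS.toRows (BBS.rowsLt (BBS.pat3 n (m+2) d2 β (d2-α) s hk hkn))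
      = casc d2 1 0 0 0 m ++ btm (m+1) πl (d2-πl) 0 := by
  have hπd : πl ≤ d2 := by rcases s with _|_ <;> simp at hπ <;> omega
  show (List.finRange (m+1)).map
      (fun i : Fin (m+1) => (List.finRange d2).map
        (fun j => (BBS.rowsLt (BBS.pat3 n (m+2) d2 β (d2-α) s hk hkn)).entry i j)) = _
  have step1 : ∀ i : Fin (m+1), (List.finRange d2).map
        (fun j => (BBS.rowsLt (BBS.pat3 n (m+2) d2 β (d2-α) s hk hkn)).entry i j)
      = (List.range d2).map (fun j =>
          if i.1 = m then (if j < πl then m+1 else m+2) else i.1+1) := by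
    intro i
    have hi := i.isLt
    refine (List.map_congr_left
      (g := fun j : Fin d2 => if i.1 = m then (if j.1 < πl then m+1 else m+2) else i.1+1)
      fun j _ => ?_).trans
      (map_finRange d2 (fun j => if i.1 = m then (if j < πl then m+1 else m+2) else i.1+1))
    have hj := j.isLt
    rcases s with _|_ <;> simp at hπ <;>
      subst hπ <;> simp only [BBS.rowsLt, BBS.pat3, Fin.coe_castLE] <;> split_ifs <;>
      first | contradiction | omega
  rw [List.map_congr_left fun i _ => step1 i,
    map_finRange (m+1) (fun a => (List.range d2).map
      (fun j => if a = m then (if j < πl then m+1 else m+2) else a+1)),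
    List.range_succ, List.map_append]
  congr 1
  · refine (List.map_congr_left (g := fun a => rep d2 (1+a)) fun a ha => ?_).trans
      (casc_const d2 1 m)
    have ha' := List.mem_range.mp ha
    rw [show (fun j : ℕ => if a = m then (if j < πl then m+1 else m+2) else a+1)
        = fun _ : ℕ => 1+a by funext j; rw [if_neg (by omega)]; omega]
    simp [List.map_const', rep]
  · simp only [List.map_cons, List.map_nil]
    have step2 := map_range_ite (m+1) (m+2) πl (d2-πl)
    rw [show πl + (d2-πl) = d2 by omega] at step2
    have : btm (m+1) πl (d2-πl) 0 = [rep πl (m+1) ++ rep (d2-πl) (m+2)] := rfl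
    rw [this, ← step2]
    exact congrArg (fun l => [l]) (List.map_congr_left fun j _ => by
      split_ifs <;> first | rfl | contradiction | omega)

end BBSAux

open BBSAux in
open BBS in
/-- with `u = [𝟏^{d₁}] ∈ B^{k,d₁}` and `v = [𝟏^β 𝟐_±^{d₂-α-β} 𝟑^α] ∈ B^{k,d₂}`
(`d₁ > d₂ ≥ α + β`), the total phase shift equals
`2d₂ + H(u_k ⊗ v_k) + H(u_{<k} ⊗ v_{<k}) = d₂ - α + β`. -/
theorem phase_shift_value {n k : ℕ} (hk : 2 ≤ k) (hkn : k + 2 ≤ n)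
    (d1 d2 α β : ℕ) (hd21 : d2 < d1) (hab : α + β ≤ d2) (s : Bool) :
    2 * (d2:ℤ)
      + energyH (rowK (by omega) (pat3 n k d1 d1 d1 s hk hkn))
          (rowK (by omega) (pat3 n k d2 β (d2 - α) s hk hkn))
      + energyH (rowsLt (pat3 n k d1 d1 d1 s hk hkn))
          (rowsLt (pat3 n k d2 β (d2 - α) s hk hkn))
      = (d2:ℤ) - (α:ℤ) + (β:ℤ) := by
  obtain ⟨m, rfl⟩ : ∃ m, k = m + 2 := ⟨k - 2, by omega⟩
  obtain ⟨πh, hπh⟩ : ∃ x, x = if s then d2 - α else β := ⟨_, rfl⟩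
  obtain ⟨πl, hπl⟩ : ∃ x, x = if s then β else d2 - α := ⟨_, rfl⟩
  have hπhd : πh ≤ d2 := by rcases s with _|_ <;> simp at hπh <;> omega
  have hπld : πl ≤ d2 := by rcases s with _|_ <;> simp at hπl <;> omega
  -- the `hi` energy
  have key_hi : ∀ (h1 h2 : 1 ≤ m+2),
      energyH (rowK h1 (pat3 n (m+2) d1 d1 d1 s hk hkn))
        (rowK h2 (pat3 n (m+2) d2 β (d2 - α) s hk hkn)) = (πh:ℤ) - (d2:ℤ) := by
    intro h1 h2
    have hins' : rowInsertWord (btm (m+3) πh (d2-πh) 0) (rep d1 (m+3))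
        = btm (m+3) πh (d2-πh) d1 := by
      have hins := phase_gen d2 0 (m+3) 0 (btm (m+3) πh (d2-πh))
        (fun t => btm_step (m+3) πh (d2-πh) t) (by omega) d1 0
      simpa [casc] using hins
    simp only [energyH]
    rw [conv_hi_u n m d1 s hk hkn h1, conv_hi_v n m d2 α β πh s hk hkn h2 hab hπh,
      Nat.max_eq_left (le_of_lt hd21), hins',
      east_btm (m+3) πh (d2-πh) d1 (by omega) (by omega)]
    simp [Nat.min_eq_right (le_of_lt hd21)]
    omega
  -- the `lo` energy
  have key_lo :
      energyH (rowsLt (pat3 n (m+2) d1 d1 d1 s hk hkn))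
        (rowsLt (pat3 n (m+2) d2 β (d2 - α) s hk hkn)) = (πl:ℤ) - (d2:ℤ) := by
    have hmc : rowInsertWord (casc d2 1 0 0 0 m ++ btm (m+1) πl (d2-πl) 0) (wrd d1 (m+1))
        = casc d2 1 1 d1 0 m ++ btm (m+1) πl (d2-πl) d1 := by
      have h0 := main_claim d1 d2 πl (d2-πl) m 0
      simpa [casc] using h0
    simp only [energyH]
    rw [conv_lo_u n m d1 s hk hkn, conv_lo_v n m d2 α β πl s hk hkn hab hπl,
      Nat.max_eq_left (le_of_lt hd21), hmc, east_append, east_casc d2 d1 m 1 1,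
      east_btm (m+1) πl (d2-πl) d1 (by omega) (by omega)]
    rw [show (m+2-1 : ℕ) = m+1 from rfl, min_self,
      min_eq_right (show (d2:ℤ) ≤ (d1:ℤ) from by exact_mod_cast hd21.le)]
    push_cast
    ring
  rw [key_hi, key_lo]
  rcases s with _|_ <;> simp at hπh hπl <;> omega
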